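/- Let μ be a positive measure on X and A : X × X → ℂ measurable with respect to μ × μ, satisfying A(x,y)* = A(y,x) for (μ×μ)-almost every (x,y). Let φ : X → ℂ be measurable, set B(x,y) = φ(x)* A(x,y) φ(y), and let T be the integral operator with kernel B on L²(μ). Suppose there exists α ∈ ℝ such that C_α = ess sup_x ( |φ(x)|^{2−α} ∫_X |A(x,y)| |φ(y)|^α μ(dy) ) < ∞. Then T is a bounded self-adjoint operator on L²(μ) with ‖T‖ ≤ C_α. -/

import Mathlib

open MeasureTheory Real Set Filter
open scoped Topology ENNReal ComplexConjugate

noncomputable section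

set_option maxHeartbeats 1000000

section Aux

variable {X : Type*} [MeasurableSpace X] {μ : Measure X}

/-- Cauchy–Schwarz for `lintegral`. -/
lemma schur_CS (g h : X → ℝ≥0∞) (hg : AEMeasurable g μ) (hh : AEMeasurable h μ) :
    ∫⁻ z, g z * h z ∂μ ≤
      (∫⁻ z, g z ^ (2 : ℝ) ∂μ) ^ (1 / 2 : ℝ) * (∫⁻ z, h z ^ (2 : ℝ) ∂μ) ^ (1 / 2 : ℝ) := by
  have hconj : Real.HolderConjugate 2 2 := Real.HolderConjugate.two_two
  exact ENNReal.lintegral_mul_le_Lp_mul_Lq μ hconj hg hh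

/-- Abstract Schur test in `ℝ≥0∞`. -/
lemma schur_key [SigmaFinite μ] (nk : X → X → ℝ≥0∞)
    (hnkP : Measurable fun p : X × X => nk p.1 p.2)
    (w w' : X → ℝ≥0∞) (hw : Measurable w) (hw' : Measurable w')
    (hw_top : ∀ x, w x ≠ ⊤)
    (hww_le : ∀ y, w y * w' y ≤ 1)
    (hww_nk : ∀ x y, nk x y * (w y * w' y) = nk x y)
    (C : ℝ≥0∞) (hC : C ≠ ⊤)
    (hK1 : ∀ᵐ x ∂μ, ∫⁻ y, nk x y * w y ∂μ ≤ C * w x)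
    (hK2 : ∀ᵐ y ∂μ, ∫⁻ x, nk x y * w x ∂μ ≤ C * w y)
    (F : X → ℝ≥0∞) (hF : AEMeasurable F μ) :
    ∫⁻ x, (∫⁻ y, nk x y * F y ∂μ) ^ (2 : ℝ) ∂μ ≤ C * C * ∫⁻ y, F y ^ (2 : ℝ) ∂μ := by
  have hnk_x : ∀ x, Measurable fun y => nk x y := fun x => hnkP.comp measurable_prodMk_left
  have hnk_y : ∀ y, Measurable fun x => nk x y := fun y => hnkP.comp measurable_prodMk_right
  have hcs : ∀ᵐ x ∂μ, (∫⁻ y, nk x y * F y ∂μ) ^ (2 : ℝ)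
      ≤ (C * w x) * ∫⁻ y, (nk x y * w' y) * F y ^ (2 : ℝ) ∂μ := by
    filter_upwards [hK1] with x hx
    have key : ∀ y, nk x y * F y
        = ((nk x y * w y) ^ (1/2 : ℝ)) * (((nk x y * w' y) ^ (1/2 : ℝ)) * F y) := by
      intro y
      have h1 : nk x y * w y * (nk x y * w' y) = nk x y ^ (2 : ℝ) := by
        rw [ENNReal.rpow_two, sq]
        calc nk x y * w y * (nk x y * w' y) = nk x y * (w y * w' y) * nk x y := by ring
          _ = nk x y * nk x y := by rw [hww_nk x y]
      symm
      calc ((nk x y * w y) ^ (1/2 : ℝ)) * (((nk x y * w' y) ^ (1/2 : ℝ)) * F y)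
          = ((nk x y * w y) * (nk x y * w' y)) ^ (1/2 : ℝ) * F y := by
            rw [← mul_assoc, ← ENNReal.mul_rpow_of_nonneg _ _ (by norm_num : (0:ℝ) ≤ 1/2)]
        _ = (nk x y ^ (2 : ℝ)) ^ (1/2 : ℝ) * F y := by rw [h1]
        _ = nk x y * F y := by
            rw [← ENNReal.rpow_mul, show (2:ℝ) * (1/2) = 1 by norm_num, ENNReal.rpow_one]
    have hg : AEMeasurable (fun y => (nk x y * w y) ^ (1/2 : ℝ)) μ :=
      (((hnk_x x).mul hw).pow measurable_const).aemeasurable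
    have hh : AEMeasurable (fun y => ((nk x y * w' y) ^ (1/2 : ℝ)) * F y) μ :=
      ((((hnk_x x).mul hw').pow measurable_const).aemeasurable).mul hF
    have h3 : ∫⁻ y, nk x y * F y ∂μ ≤
        (∫⁻ y, ((nk x y * w y) ^ (1/2 : ℝ)) ^ (2 : ℝ) ∂μ) ^ (1/2 : ℝ) *
        (∫⁻ y, (((nk x y * w' y) ^ (1/2 : ℝ)) * F y) ^ (2 : ℝ) ∂μ) ^ (1/2 : ℝ) := by
      rw [lintegral_congr key]
      exact schur_CS _ _ hg hh
    have e1 : (fun y => ((nk x y * w y) ^ (1/2 : ℝ)) ^ (2 : ℝ)) = fun y => nk x y * w y := by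
      funext y
      rw [← ENNReal.rpow_mul, show (1/2 : ℝ) * 2 = 1 by norm_num, ENNReal.rpow_one]
    have e2 : (fun y => (((nk x y * w' y) ^ (1/2 : ℝ)) * F y) ^ (2 : ℝ))
        = fun y => (nk x y * w' y) * F y ^ (2 : ℝ) := by
      funext y
      rw [ENNReal.mul_rpow_of_nonneg _ _ (by norm_num : (0:ℝ) ≤ 2), ← ENNReal.rpow_mul,
        show (1/2 : ℝ) * 2 = 1 by norm_num, ENNReal.rpow_one]
    rw [e1, e2] at h3
    have h4 := ENNReal.rpow_le_rpow h3 (by norm_num : (0:ℝ) ≤ 2)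
    rw [ENNReal.mul_rpow_of_nonneg _ _ (by norm_num : (0:ℝ) ≤ 2), ← ENNReal.rpow_mul,
      ← ENNReal.rpow_mul, show (1/2 : ℝ) * 2 = 1 by norm_num, ENNReal.rpow_one,
      ENNReal.rpow_one] at h4
    exact h4.trans (mul_le_mul_left hx _)
  have hmeas_prod : AEMeasurable
      (fun p : X × X => w p.1 * (nk p.1 p.2 * (w' p.2 * F p.2 ^ (2 : ℝ)))) (μ.prod μ) := by
    have hFsnd : AEMeasurable (fun p : X × X => F p.2) (μ.prod μ) :=
      hF.comp_quasiMeasurePreserving Measure.quasiMeasurePreserving_snd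
    exact (hw.comp measurable_fst).aemeasurable.mul
      (hnkP.aemeasurable.mul
        ((hw'.comp measurable_snd).aemeasurable.mul (hFsnd.pow aemeasurable_const)))
  calc ∫⁻ x, (∫⁻ y, nk x y * F y ∂μ) ^ (2 : ℝ) ∂μ
      ≤ ∫⁻ x, (C * w x) * ∫⁻ y, (nk x y * w' y) * F y ^ (2 : ℝ) ∂μ ∂μ :=
        lintegral_mono_ae hcs
    _ = C * ∫⁻ x, ∫⁻ y, w x * (nk x y * (w' y * F y ^ (2 : ℝ))) ∂μ ∂μ := by
        rw [← lintegral_const_mul' C _ hC]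
        refine lintegral_congr fun x => ?_
        rw [mul_assoc]
        congr 1
        rw [← lintegral_const_mul' (w x) _ (hw_top x)]
        exact lintegral_congr fun y => by ring
    _ = C * ∫⁻ y, ∫⁻ x, w x * (nk x y * (w' y * F y ^ (2 : ℝ))) ∂μ ∂μ := by
        congr 1
        exact lintegral_lintegral_swap hmeas_prod
    _ ≤ C * ∫⁻ y, (w y * w' y) * F y ^ (2 : ℝ) * C ∂μ := by
        refine mul_le_mul_right (lintegral_mono_ae ?_) C
        filter_upwards [hK2] with y hy
        calc ∫⁻ x, w x * (nk x y * (w' y * F y ^ (2 : ℝ))) ∂μ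
            = (w' y * F y ^ (2 : ℝ)) * ∫⁻ x, nk x y * w x ∂μ := by
              rw [← lintegral_const_mul (f := fun x => nk x y * w x) _ ((hnk_y y).mul hw)]
              exact lintegral_congr fun x => by ring
          _ ≤ (w' y * F y ^ (2 : ℝ)) * (C * w y) := mul_le_mul_right hy _
          _ = (w y * w' y) * F y ^ (2 : ℝ) * C := by ring
    _ ≤ C * ∫⁻ y, F y ^ (2 : ℝ) * C ∂μ := by
        refine mul_le_mul_right (lintegral_mono fun y => ?_) C
        refine mul_le_mul_left ?_ C
        calc (w y * w' y) * F y ^ (2 : ℝ) ≤ 1 * F y ^ (2 : ℝ) :=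
              mul_le_mul_left (hww_le y) _
          _ = F y ^ (2 : ℝ) := one_mul _
    _ = C * C * ∫⁻ y, F y ^ (2 : ℝ) ∂μ := by
        rw [lintegral_mul_const' C _ hC]
        ring

/-- Abstract construction of the bounded self-adjoint integral operator from the
`ℝ≥0∞`-valued Schur bound. -/
lemma schur_operator [SigmaFinite μ] (k : X → X → ℂ)
    (hkP : Measurable fun p : X × X => k p.1 p.2)
    (hsymk : ∀ᵐ p ∂(μ.prod μ), (starRingEnd ℂ) (k p.1 p.2) = k p.2 p.1)
    (C : ℝ≥0∞) (hC : C ≠ ⊤)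
    (hrow : ∀ F : X → ℝ≥0∞, AEMeasurable F μ →
      ∫⁻ x, (∫⁻ y, (‖k x y‖₊ : ℝ≥0∞) * F y ∂μ) ^ (2 : ℝ) ∂μ ≤
        C * C * ∫⁻ y, F y ^ (2 : ℝ) ∂μ) :
    ∃ T : Lp ℂ 2 μ →L[ℂ] Lp ℂ 2 μ,
      IsSelfAdjoint T ∧ ‖T‖ ≤ C.toReal ∧
      ∀ f : Lp ℂ 2 μ, (T f : X → ℂ) =ᵐ[μ] fun x => ∫ y, k x y * f y ∂μ := by
  have hk_x : ∀ x, Measurable fun y => k x y := fun x => hkP.comp measurable_prodMk_left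
  have hk_y : ∀ y, Measurable fun x => k x y := fun y => hkP.comp measurable_prodMk_right
  -- `eLpNorm` at exponent 2
  have hsn : ∀ h : X → ℂ, eLpNorm h 2 μ
      = (∫⁻ y, (‖h y‖₊ : ℝ≥0∞) ^ (2 : ℝ) ∂μ) ^ (1/2 : ℝ) := by
    intro h
    rw [eLpNorm_eq_lintegral_rpow_enorm_toReal (by norm_num) (by norm_num)]
    norm_num
    rfl
  have hsq_fin : ∀ h : X → ℂ, eLpNorm h 2 μ ≠ ⊤ →
      ∫⁻ y, (‖h y‖₊ : ℝ≥0∞) ^ (2 : ℝ) ∂μ < ⊤ := by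
    intro h hh
    by_contra hcon
    rw [not_lt, top_le_iff] at hcon
    rw [hsn h, hcon] at hh
    exact hh (by rw [ENNReal.top_rpow_of_pos (by norm_num)])
  -- the main analytic package
  have pack : ∀ h : X → ℂ, Measurable h → eLpNorm h 2 μ ≠ ⊤ →
      MemLp (fun x => ∫ y, k x y * h y ∂μ) 2 μ ∧
      eLpNorm (fun x => ∫ y, k x y * h y ∂μ) 2 μ ≤ C * eLpNorm h 2 μ ∧
      (∀ᵐ x ∂μ, Integrable (fun y => k x y * h y) μ) ∧
      ∫⁻ x, (∫⁻ y, (‖k x y‖₊ : ℝ≥0∞) * ‖h y‖₊ ∂μ) ^ (2 : ℝ) ∂μ < ⊤ := by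
    intro h hm hsnfin
    have hrowm : Measurable (fun x => ∫⁻ y, (‖k x y‖₊ : ℝ≥0∞) * ‖h y‖₊ ∂μ) :=
      (hkP.nnnorm.coe_nnreal_ennreal.mul (hm.nnnorm.coe_nnreal_ennreal.comp measurable_snd)).lintegral_prod_right'
    have hS := hrow _ hm.nnnorm.coe_nnreal_ennreal.aemeasurable
    have hfin2 : ∫⁻ y, (‖h y‖₊ : ℝ≥0∞) ^ (2 : ℝ) ∂μ < ⊤ := hsq_fin h hsnfin
    have hSfin : ∫⁻ x, (∫⁻ y, (‖k x y‖₊ : ℝ≥0∞) * ‖h y‖₊ ∂μ) ^ (2 : ℝ) ∂μ < ⊤ :=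
      lt_of_le_of_lt hS (ENNReal.mul_lt_top
        (ENNReal.mul_ne_top hC hC).lt_top hfin2)
    have hrowae : ∀ᵐ x ∂μ, (∫⁻ y, (‖k x y‖₊ : ℝ≥0∞) * ‖h y‖₊ ∂μ) < ⊤ := by
      have h1 : ∀ᵐ x ∂μ, (∫⁻ y, (‖k x y‖₊ : ℝ≥0∞) * ‖h y‖₊ ∂μ) ^ (2 : ℝ) < ⊤ :=
        ae_lt_top (hrowm.pow measurable_const) hSfin.ne
      filter_upwards [h1] with x hx
      by_contra hcon
      rw [not_lt, top_le_iff] at hcon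
      rw [hcon, ENNReal.top_rpow_of_pos (by norm_num)] at hx
      exact lt_irrefl _ hx
    have hnkmul : ∀ x, (fun y => ((‖k x y * h y‖₊ : ℝ≥0∞)))
        = fun y => (‖k x y‖₊ : ℝ≥0∞) * ‖h y‖₊ := by
      intro x; funext y; rw [nnnorm_mul, ENNReal.coe_mul]
    have hint : ∀ᵐ x ∂μ, Integrable (fun y => k x y * h y) μ := by
      filter_upwards [hrowae] with x hx
      refine ⟨((hk_x x).mul hm).aestronglyMeasurable, ?_⟩
      rw [hasFiniteIntegral_def]
      calc ∫⁻ y, (‖k x y * h y‖₊ : ℝ≥0∞) ∂μ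
          = ∫⁻ y, (‖k x y‖₊ : ℝ≥0∞) * ‖h y‖₊ ∂μ := by rw [hnkmul x]
        _ < ⊤ := hx
    have hgb : ∀ x, (‖∫ y, k x y * h y ∂μ‖₊ : ℝ≥0∞)
        ≤ ∫⁻ y, (‖k x y‖₊ : ℝ≥0∞) * ‖h y‖₊ ∂μ := by
      intro x
      calc (‖∫ y, k x y * h y ∂μ‖₊ : ℝ≥0∞) ≤ ∫⁻ y, (‖k x y * h y‖₊ : ℝ≥0∞) ∂μ :=
            enorm_integral_le_lintegral_enorm _
        _ = ∫⁻ y, (‖k x y‖₊ : ℝ≥0∞) * ‖h y‖₊ ∂μ := by rw [hnkmul x]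
    have hsm : StronglyMeasurable (fun x => ∫ y, k x y * h y ∂μ) :=
      (hkP.mul (hm.comp measurable_snd)).stronglyMeasurable.integral_prod_right'
    have hCC : C * C = C ^ (2 : ℝ) := by rw [ENNReal.rpow_two, sq]
    have hbound : eLpNorm (fun x => ∫ y, k x y * h y ∂μ) 2 μ ≤ C * eLpNorm h 2 μ := by
      rw [hsn, hsn]
      calc (∫⁻ x, (‖∫ y, k x y * h y ∂μ‖₊ : ℝ≥0∞) ^ (2 : ℝ) ∂μ) ^ (1/2 : ℝ)
          ≤ (∫⁻ x, (∫⁻ y, (‖k x y‖₊ : ℝ≥0∞) * ‖h y‖₊ ∂μ) ^ (2 : ℝ) ∂μ) ^ (1/2 : ℝ) := by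
            refine ENNReal.rpow_le_rpow (lintegral_mono fun x => ?_) (by norm_num)
            exact ENNReal.rpow_le_rpow (hgb x) (by norm_num)
        _ ≤ (C * C * ∫⁻ y, (‖h y‖₊ : ℝ≥0∞) ^ (2 : ℝ) ∂μ) ^ (1/2 : ℝ) :=
            ENNReal.rpow_le_rpow hS (by norm_num)
        _ = C * (∫⁻ y, (‖h y‖₊ : ℝ≥0∞) ^ (2 : ℝ) ∂μ) ^ (1/2 : ℝ) := by
            rw [ENNReal.mul_rpow_of_nonneg _ _ (by norm_num : (0:ℝ) ≤ 1/2)]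
            congr 1
            rw [hCC, ← ENNReal.rpow_mul, show (2:ℝ) * (1/2) = 1 by norm_num,
              ENNReal.rpow_one]
    have hmemh : MemLp (fun x => ∫ y, k x y * h y ∂μ) 2 μ :=
      ⟨hsm.aestronglyMeasurable,
        lt_of_le_of_lt hbound (ENNReal.mul_lt_top hC.lt_top hsnfin.lt_top)⟩
    exact ⟨hmemh, hbound, hint, hSfin⟩
  -- measurable representatives
  have hchoice : ∀ f : Lp ℂ 2 μ, ∃ g : X → ℂ,
      Measurable g ∧ (f : X → ℂ) =ᵐ[μ] g := fun f =>
    ⟨_, (Lp.aestronglyMeasurable f).stronglyMeasurable_mk.measurable,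
      (Lp.aestronglyMeasurable f).ae_eq_mk⟩
  choose rep hrep_meas hrep_ae using hchoice
  have hrep_sn : ∀ f : Lp ℂ 2 μ, eLpNorm (rep f) 2 μ ≠ ⊤ := by
    intro f
    rw [← eLpNorm_congr_ae (hrep_ae f)]
    exact (Lp.eLpNorm_lt_top f).ne
  have hmem : ∀ f : Lp ℂ 2 μ, MemLp (fun x => ∫ y, k x y * rep f y ∂μ) 2 μ := fun f =>
    (pack (rep f) (hrep_meas f) (hrep_sn f)).1
  have hT0ae : ∀ f : Lp ℂ 2 μ,
      ((hmem f).toLp _ : X → ℂ) =ᵐ[μ] fun x => ∫ y, k x y * (f : X → ℂ) y ∂μ := by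
    intro f
    refine (MemLp.coeFn_toLp (hmem f)).trans ?_
    refine Filter.Eventually.of_forall fun x => ?_
    refine integral_congr_ae ?_
    filter_upwards [hrep_ae f] with y hy
    rw [hy]
  have hint : ∀ f : Lp ℂ 2 μ, ∀ᵐ x ∂μ, Integrable (fun y => k x y * (f : X → ℂ) y) μ := by
    intro f
    filter_upwards [(pack (rep f) (hrep_meas f) (hrep_sn f)).2.2.1] with x hx
    exact hx.congr (((hrep_ae f).symm).mono fun y hy => by simp only [hy])
  -- additivity and homogeneity
  have hadd : ∀ f g : Lp ℂ 2 μ,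
      (hmem (f + g)).toLp _ = (hmem f).toLp _ + (hmem g).toLp _ := by
    intro f g
    apply Lp.ext
    have h1 : ((hmem (f + g)).toLp _ : X → ℂ) =ᵐ[μ]
        fun x => ∫ y, k x y * ((f : X → ℂ) y + (g : X → ℂ) y) ∂μ := by
      refine (hT0ae (f + g)).trans ?_
      refine Filter.Eventually.of_forall fun x => ?_
      refine integral_congr_ae ?_
      filter_upwards [Lp.coeFn_add f g] with y hy
      simp only [hy, Pi.add_apply]
    have h2 : (((hmem f).toLp _ + (hmem g).toLp _ : Lp ℂ 2 μ) : X → ℂ) =ᵐ[μ]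
        fun x => (∫ y, k x y * (f : X → ℂ) y ∂μ) + ∫ y, k x y * (g : X → ℂ) y ∂μ := by
      refine (Lp.coeFn_add _ _).trans ?_
      filter_upwards [hT0ae f, hT0ae g] with x hxf hxg
      simp only [Pi.add_apply, hxf, hxg]
    refine h1.trans (Filter.EventuallyEq.trans ?_ h2.symm)
    filter_upwards [hint f, hint g] with x hxf hxg
    have he : (fun y => k x y * ((f : X → ℂ) y + (g : X → ℂ) y))
        = fun y => k x y * (f : X → ℂ) y + k x y * (g : X → ℂ) y := by
      funext y; ring
    simp only [he, integral_add hxf hxg]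
  have hsmul : ∀ (c : ℂ) (f : Lp ℂ 2 μ),
      (hmem (c • f)).toLp _ = c • (hmem f).toLp _ := by
    intro c f
    apply Lp.ext
    have h1 : ((hmem (c • f)).toLp _ : X → ℂ) =ᵐ[μ]
        fun x => ∫ y, k x y * (c * (f : X → ℂ) y) ∂μ := by
      refine (hT0ae (c • f)).trans ?_
      refine Filter.Eventually.of_forall fun x => ?_
      refine integral_congr_ae ?_
      filter_upwards [Lp.coeFn_smul c f] with y hy
      simp only [hy, Pi.smul_apply, smul_eq_mul]
    have h2 : ((c • (hmem f).toLp _ : Lp ℂ 2 μ) : X → ℂ) =ᵐ[μ]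
        fun x => c * ∫ y, k x y * (f : X → ℂ) y ∂μ := by
      refine (Lp.coeFn_smul _ _).trans ?_
      filter_upwards [hT0ae f] with x hx
      simp only [Pi.smul_apply, hx, smul_eq_mul]
    refine h1.trans (Filter.EventuallyEq.trans ?_ h2.symm)
    refine Filter.Eventually.of_forall fun x => ?_
    have he : (fun y => k x y * (c * (f : X → ℂ) y))
        = fun y => c • (k x y * (f : X → ℂ) y) := by
      funext y; simp only [smul_eq_mul]; ring
    dsimp only
    rw [he, integral_smul]
    rfl
  -- the norm bound
  have hnorm : ∀ f : Lp ℂ 2 μ, ‖(hmem f).toLp _‖ ≤ C.toReal * ‖f‖ := by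
    intro f
    rw [Lp.norm_def, Lp.norm_def]
    have h2 : eLpNorm ((hmem f).toLp _ : X → ℂ) 2 μ ≤ C * eLpNorm (f : X → ℂ) 2 μ := by
      rw [eLpNorm_congr_ae (MemLp.coeFn_toLp (hmem f))]
      calc eLpNorm (fun x => ∫ y, k x y * rep f y ∂μ) 2 μ
          ≤ C * eLpNorm (rep f) 2 μ := (pack (rep f) (hrep_meas f) (hrep_sn f)).2.1
        _ = C * eLpNorm (f : X → ℂ) 2 μ := by rw [eLpNorm_congr_ae (hrep_ae f)]
    calc (eLpNorm ((hmem f).toLp _ : X → ℂ) 2 μ).toReal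
        ≤ (C * eLpNorm (f : X → ℂ) 2 μ).toReal :=
          ENNReal.toReal_mono (ENNReal.mul_ne_top hC (Lp.eLpNorm_ne_top f)) h2
      _ = C.toReal * (eLpNorm (f : X → ℂ) 2 μ).toReal := ENNReal.toReal_mul
  -- assemble the operator
  set Tl : Lp ℂ 2 μ →ₗ[ℂ] Lp ℂ 2 μ :=
    { toFun := fun f => (hmem f).toLp _
      map_add' := hadd
      map_smul' := fun c f => by simpa using hsmul c f } with hTl
  set T : Lp ℂ 2 μ →L[ℂ] Lp ℂ 2 μ := LinearMap.mkContinuous Tl C.toReal hnorm with hT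
  have hTapp : ∀ f, T f = (hmem f).toLp _ := fun f => rfl
  have hTae : ∀ f : Lp ℂ 2 μ, (T f : X → ℂ) =ᵐ[μ] fun x => ∫ y, k x y * rep f y ∂μ := by
    intro f
    rw [hTapp f]
    exact MemLp.coeFn_toLp _
  refine ⟨T, ?_, ?_, ?_⟩
  · -- self-adjointness
    rw [ContinuousLinearMap.isSelfAdjoint_iff_isSymmetric]
    intro u v
    simp only [ContinuousLinearMap.coe_coe]
    rw [L2.inner_def, L2.inner_def]
    simp only [RCLike.inner_apply]
    have hrow_u_fin := (pack (rep u) (hrep_meas u) (hrep_sn u)).2.2.2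
    have hv_sq : ∫⁻ x, (‖rep v x‖₊ : ℝ≥0∞) ^ (2 : ℝ) ∂μ < ⊤ := hsq_fin _ (hrep_sn v)
    have hrowmeas : Measurable (fun x => ∫⁻ y, (‖k x y‖₊ : ℝ≥0∞) * ‖rep u y‖₊ ∂μ) :=
      (hkP.nnnorm.coe_nnreal_ennreal.mul ((hrep_meas u).nnnorm.coe_nnreal_ennreal.comp measurable_snd)).lintegral_prod_right'
    have hHmeas : Measurable (fun p : X × X =>
        (starRingEnd ℂ) (k p.1 p.2) * (starRingEnd ℂ) (rep u p.2) * rep v p.1) := by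
      simp only [starRingEnd_apply]
      exact ((continuous_star.measurable.comp hkP).mul
        (continuous_star.measurable.comp ((hrep_meas u).comp measurable_snd))).mul
        ((hrep_meas v).comp measurable_fst)
    have hH : Integrable (fun p : X × X =>
        (starRingEnd ℂ) (k p.1 p.2) * (starRingEnd ℂ) (rep u p.2) * rep v p.1)
        (μ.prod μ) := by
      refine ⟨hHmeas.aestronglyMeasurable, ?_⟩
      rw [hasFiniteIntegral_def]
      have heq : ∀ p : X × X,
          (‖(starRingEnd ℂ) (k p.1 p.2) * (starRingEnd ℂ) (rep u p.2) * rep v p.1‖₊ : ℝ≥0∞)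
          = (‖rep v p.1‖₊ : ℝ≥0∞) * ((‖k p.1 p.2‖₊ : ℝ≥0∞) * ‖rep u p.2‖₊) := by
        intro p
        simp only [nnnorm_mul, starRingEnd_apply, nnnorm_star, ENNReal.coe_mul]
        ring
      have hmeas2 : AEMeasurable (fun p : X × X =>
          (‖rep v p.1‖₊ : ℝ≥0∞) * ((‖k p.1 p.2‖₊ : ℝ≥0∞) * ‖rep u p.2‖₊)) (μ.prod μ) :=
        (((hrep_meas v).nnnorm.coe_nnreal_ennreal.comp measurable_fst).mul
          (hkP.nnnorm.coe_nnreal_ennreal.mul ((hrep_meas u).nnnorm.coe_nnreal_ennreal.comp measurable_snd))).aemeasurable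
      calc ∫⁻ p, (‖(starRingEnd ℂ) (k p.1 p.2) * (starRingEnd ℂ) (rep u p.2) *
              rep v p.1‖₊ : ℝ≥0∞) ∂(μ.prod μ)
          = ∫⁻ x, ∫⁻ y, (‖rep v x‖₊ : ℝ≥0∞) * ((‖k x y‖₊ : ℝ≥0∞) * ‖rep u y‖₊) ∂μ ∂μ := by
            rw [lintegral_congr heq, MeasureTheory.lintegral_prod _ hmeas2]
        _ = ∫⁻ x, (‖rep v x‖₊ : ℝ≥0∞) * ∫⁻ y, (‖k x y‖₊ : ℝ≥0∞) * ‖rep u y‖₊ ∂μ ∂μ := by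
            refine lintegral_congr fun x => lintegral_const_mul _ ?_
            exact (hk_x x).nnnorm.coe_nnreal_ennreal.mul (hrep_meas u).nnnorm.coe_nnreal_ennreal
        _ ≤ (∫⁻ x, (‖rep v x‖₊ : ℝ≥0∞) ^ (2 : ℝ) ∂μ) ^ (1/2 : ℝ) *
              (∫⁻ x, (∫⁻ y, (‖k x y‖₊ : ℝ≥0∞) * ‖rep u y‖₊ ∂μ) ^ (2 : ℝ) ∂μ) ^ (1/2 : ℝ) :=
            schur_CS _ _ (hrep_meas v).nnnorm.coe_nnreal_ennreal.aemeasurable hrowmeas.aemeasurable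
        _ < ⊤ := ENNReal.mul_lt_top
            (ENNReal.rpow_lt_top_of_nonneg (by norm_num) hv_sq.ne)
            (ENNReal.rpow_lt_top_of_nonneg (by norm_num) hrow_u_fin.ne)
    have hsymk2 : ∀ᵐ y ∂μ, ∀ᵐ x ∂μ, (starRingEnd ℂ) (k x y) = k y x := by
      have h2 : ∀ᵐ p ∂(μ.prod μ), (starRingEnd ℂ) (k p.2 p.1) = k p.1 p.2 :=
        (Measure.measurePreserving_swap (μ := μ) (ν := μ)).quasiMeasurePreserving.ae hsymk
      exact Measure.ae_ae_of_ae_prod h2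
    have step1 : ∫ x, (starRingEnd ℂ) ((T u : X → ℂ) x) * (v : X → ℂ) x ∂μ
        = ∫ x, ∫ y, (starRingEnd ℂ) (k x y) * (starRingEnd ℂ) (rep u y) * rep v x ∂μ ∂μ := by
      refine integral_congr_ae ?_
      filter_upwards [hTae u, hrep_ae v] with x hx hvx
      rw [hx, hvx, ← integral_conj, ← integral_mul_const]
      refine integral_congr_ae (Filter.Eventually.of_forall fun y => ?_)
      simp only [map_mul]
    have step2 : ∫ x, ∫ y, (starRingEnd ℂ) (k x y) * (starRingEnd ℂ) (rep u y) * rep v x ∂μ ∂μ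
        = ∫ y, ∫ x, (starRingEnd ℂ) (k x y) * (starRingEnd ℂ) (rep u y) * rep v x ∂μ ∂μ :=
      integral_integral_swap hH
    have step3 : ∫ y, ∫ x, (starRingEnd ℂ) (k x y) * (starRingEnd ℂ) (rep u y) * rep v x ∂μ ∂μ
        = ∫ y, (starRingEnd ℂ) (rep u y) * ∫ x, k y x * rep v x ∂μ ∂μ := by
      refine integral_congr_ae ?_
      filter_upwards [hsymk2] with y hy
      rw [← integral_const_mul]
      refine integral_congr_ae ?_
      filter_upwards [hy] with x hx
      rw [hx]; ring
    have step4 : ∫ y, (starRingEnd ℂ) (rep u y) * ∫ x, k y x * rep v x ∂μ ∂μ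
        = ∫ y, (starRingEnd ℂ) ((u : X → ℂ) y) * (T v : X → ℂ) y ∂μ := by
      refine integral_congr_ae ?_
      filter_upwards [hTae v, hrep_ae u] with y hTy huy
      rw [hTy, huy]
    simp only [mul_comm ((v : X → ℂ) _) _, mul_comm ((T v : X → ℂ) _) _]
    rw [step1, step2, step3, step4]
  · exact LinearMap.mkContinuous_norm_le _ ENNReal.toReal_nonneg hnorm
  · intro f
    rw [hTapp f]
    exact hT0ae f

end Aux

/-- **Proposition A.1 (Schur-type bound).**  Let `μ` be a (σ-finite) positive measure on
`X`, `A : X × X → ℂ` measurable with `A(x,y)* = A(y,x)` a.e., `φ : X → ℂ` measurable, and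
`B(x,y) = φ(x)* A(x,y) φ(y)`.  If for some `α ∈ ℝ` the quantity
`C_α = ess sup_x (|φ(x)|^{2−α} ∫ |A(x,y)| |φ(y)|^α μ(dy))` is finite (with the conventions
`0·∞ = 0`, `0⁰ = 1`), then the integral operator `T` with kernel `B` is a bounded
self-adjoint operator on `L²(μ)` with `‖T‖ ≤ C_α`. -/
theorem schur_type_integral_operator_bound
    {X : Type*} [MeasurableSpace X] (μ : Measure X) [SigmaFinite μ]
    (A : X → X → ℂ) (hA : Measurable fun p : X × X => A p.1 p.2)
    (hsym : ∀ᵐ p ∂(μ.prod μ), (starRingEnd ℂ) (A p.1 p.2) = A p.2 p.1)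
    (φ : X → ℂ) (hφ : Measurable φ) (α : ℝ)
    (hfin :
      essSup
        (fun x => ENNReal.ofReal (‖φ x‖ ^ (2 - α)) *
          ∫⁻ y, ENNReal.ofReal (‖A x y‖ * ‖φ y‖ ^ α) ∂μ) μ ≠ ⊤) :
    ∃ T : Lp ℂ 2 μ →L[ℂ] Lp ℂ 2 μ,
      IsSelfAdjoint T ∧
      ‖T‖ ≤
        (essSup
          (fun x => ENNReal.ofReal (‖φ x‖ ^ (2 - α)) *
            ∫⁻ y, ENNReal.ofReal (‖A x y‖ * ‖φ y‖ ^ α) ∂μ) μ).toReal ∧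
      ∀ f : Lp ℂ 2 μ,
        (T f : X → ℂ) =ᵐ[μ]
          fun x => ∫ y, (starRingEnd ℂ) (φ x) * A x y * φ y * f y ∂μ := by
  classical
  set Cε := essSup
      (fun x => ENNReal.ofReal (‖φ x‖ ^ (2 - α)) *
        ∫⁻ y, ENNReal.ofReal (‖A x y‖ * ‖φ y‖ ^ α) ∂μ) μ with hCdef
  set k : X → X → ℂ := fun x y => (starRingEnd ℂ) (φ x) * A x y * φ y with hkdef
  have hkP : Measurable (fun p : X × X => k p.1 p.2) := by
    simp only [hkdef, starRingEnd_apply]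
    exact ((continuous_star.measurable.comp (hφ.comp measurable_fst)).mul hA).mul
      (hφ.comp measurable_snd)
  -- symmetry of the kernel
  have hsymk : ∀ᵐ p ∂(μ.prod μ), (starRingEnd ℂ) (k p.1 p.2) = k p.2 p.1 := by
    filter_upwards [hsym] with p hp
    simp only [hkdef, map_mul, Complex.conj_conj]
    rw [hp]; ring
  -- norm of the kernel
  have hnk_val : ∀ x y, (‖k x y‖₊ : ℝ≥0∞)
      = ENNReal.ofReal ‖φ x‖ * (ENNReal.ofReal ‖A x y‖ * ENNReal.ofReal ‖φ y‖) := by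
    intro x y
    have hnorm : ‖k x y‖ = ‖φ x‖ * (‖A x y‖ * ‖φ y‖) := by
      simp only [hkdef, norm_mul, RCLike.norm_conj]; ring
    rw [← enorm_eq_nnnorm, ← ofReal_norm, hnorm,
      ENNReal.ofReal_mul (norm_nonneg _), ENNReal.ofReal_mul (norm_nonneg _)]
  -- the weights
  set w : X → ℝ≥0∞ := fun x => if φ x = 0 then 0 else ENNReal.ofReal (‖φ x‖ ^ (α - 1))
    with hwdef
  set w' : X → ℝ≥0∞ := fun x => if φ x = 0 then 0 else ENNReal.ofReal (‖φ x‖ ^ (1 - α))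
    with hw'def
  have hw_meas : Measurable w := by
    rw [hwdef]
    exact Measurable.ite (hφ (measurableSet_singleton 0)) measurable_const
      ((hφ.norm.pow measurable_const).ennreal_ofReal)
  have hw'_meas : Measurable w' := by
    rw [hw'def]
    exact Measurable.ite (hφ (measurableSet_singleton 0)) measurable_const
      ((hφ.norm.pow measurable_const).ennreal_ofReal)
  have hw_top : ∀ x, w x ≠ ⊤ := by
    intro x; rw [hwdef]; dsimp only; split <;> simp
  have hww_eq : ∀ x, φ x ≠ 0 → w x * w' x = 1 := by
    intro x hx
    have hpos : 0 < ‖φ x‖ := norm_pos_iff.mpr hx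
    rw [hwdef, hw'def]; dsimp only; rw [if_neg hx, if_neg hx,
      ← ENNReal.ofReal_mul (rpow_nonneg hpos.le _), ← Real.rpow_add hpos]
    norm_num
  have hww_le : ∀ x, w x * w' x ≤ 1 := by
    intro x
    by_cases hx : φ x = 0
    · rw [hwdef]; dsimp only; rw [if_pos hx, zero_mul]; exact zero_le'
    · rw [hww_eq x hx]
  have hww_nk : ∀ x y, (‖k x y‖₊ : ℝ≥0∞) * (w y * w' y) = (‖k x y‖₊ : ℝ≥0∞) := by
    intro x y
    by_cases hy : φ y = 0
    · rw [hnk_val]; simp [hy]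
    · rw [hww_eq y hy, mul_one]
  -- the two Schur bounds
  have hA_y_meas : ∀ x, Measurable fun y => ENNReal.ofReal (‖A x y‖ * ‖φ y‖ ^ α) := by
    intro x
    exact ((hA.comp measurable_prodMk_left).norm.mul
      (hφ.norm.pow measurable_const)).ennreal_ofReal
  have hK1 : ∀ᵐ x ∂μ, ∫⁻ y, (‖k x y‖₊ : ℝ≥0∞) * w y ∂μ ≤ Cε * w x := by
    have hbd := ae_le_essSup (μ := μ)
      (f := fun x => ENNReal.ofReal (‖φ x‖ ^ (2 - α)) *
        ∫⁻ y, ENNReal.ofReal (‖A x y‖ * ‖φ y‖ ^ α) ∂μ)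
    rw [← hCdef] at hbd
    filter_upwards [hbd] with x hx
    by_cases hx0 : φ x = 0
    · have h0 : ∀ y, (‖k x y‖₊ : ℝ≥0∞) * w y = 0 := by
        intro y; rw [hnk_val]; simp [hx0]
      calc ∫⁻ y, (‖k x y‖₊ : ℝ≥0∞) * w y ∂μ = ∫⁻ _, (0 : ℝ≥0∞) ∂μ :=
            lintegral_congr h0
        _ = 0 := lintegral_zero
        _ ≤ Cε * w x := zero_le'
    · have hxpos : 0 < ‖φ x‖ := norm_pos_iff.mpr hx0
      calc ∫⁻ y, (‖k x y‖₊ : ℝ≥0∞) * w y ∂μ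
          ≤ ∫⁻ y, ENNReal.ofReal ‖φ x‖ * ENNReal.ofReal (‖A x y‖ * ‖φ y‖ ^ α) ∂μ := by
            refine lintegral_mono fun y => ?_
            by_cases hy0 : φ y = 0
            · rw [hwdef]; dsimp only; rw [if_pos hy0, mul_zero]; exact zero_le'
            · have hypos : 0 < ‖φ y‖ := norm_pos_iff.mpr hy0
              rw [hnk_val, hwdef]; dsimp only; rw [if_neg hy0]
              have hr : ENNReal.ofReal ‖φ y‖ * ENNReal.ofReal (‖φ y‖ ^ (α - 1))
                  = ENNReal.ofReal (‖φ y‖ ^ α) := by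
                rw [← ENNReal.ofReal_mul (norm_nonneg _)]
                congr 1
                conv_rhs => rw [show α = 1 + (α - 1) by ring]
                rw [Real.rpow_add hypos, Real.rpow_one]
              refine le_of_eq ?_
              calc ENNReal.ofReal ‖φ x‖ *
                    (ENNReal.ofReal ‖A x y‖ * ENNReal.ofReal ‖φ y‖) *
                    ENNReal.ofReal (‖φ y‖ ^ (α - 1))
                  = ENNReal.ofReal ‖φ x‖ * (ENNReal.ofReal ‖A x y‖ *
                      (ENNReal.ofReal ‖φ y‖ * ENNReal.ofReal (‖φ y‖ ^ (α - 1)))) := by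
                    ring
                _ = ENNReal.ofReal ‖φ x‖ *
                      (ENNReal.ofReal ‖A x y‖ * ENNReal.ofReal (‖φ y‖ ^ α)) := by rw [hr]
                _ = ENNReal.ofReal ‖φ x‖ * ENNReal.ofReal (‖A x y‖ * ‖φ y‖ ^ α) := by
                    rw [ENNReal.ofReal_mul (norm_nonneg _)]
        _ = ENNReal.ofReal ‖φ x‖ * ∫⁻ y, ENNReal.ofReal (‖A x y‖ * ‖φ y‖ ^ α) ∂μ :=
            lintegral_const_mul _ (hA_y_meas x)
        _ = w x * (ENNReal.ofReal (‖φ x‖ ^ (2 - α)) *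
              ∫⁻ y, ENNReal.ofReal (‖A x y‖ * ‖φ y‖ ^ α) ∂μ) := by
            rw [← mul_assoc]
            congr 1
            rw [hwdef]; dsimp only; rw [if_neg hx0,
              ← ENNReal.ofReal_mul (rpow_nonneg hxpos.le _), ← Real.rpow_add hxpos,
              show α - 1 + (2 - α) = 1 by ring, Real.rpow_one]
        _ ≤ w x * Cε := mul_le_mul_right hx _
        _ = Cε * w x := mul_comm _ _
  have hnksymm' : ∀ᵐ y ∂μ, ∀ᵐ x ∂μ, (‖k x y‖₊ : ℝ≥0∞) = (‖k y x‖₊ : ℝ≥0∞) := by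
    have hnksymm : ∀ᵐ p ∂(μ.prod μ),
        (‖k p.2 p.1‖₊ : ℝ≥0∞) = (‖k p.1 p.2‖₊ : ℝ≥0∞) := by
      filter_upwards [hsymk] with p hp
      rw [← hp, starRingEnd_apply, nnnorm_star]
    exact Measure.ae_ae_of_ae_prod hnksymm
  have hK2 : ∀ᵐ y ∂μ, ∫⁻ x, (‖k x y‖₊ : ℝ≥0∞) * w x ∂μ ≤ Cε * w y := by
    filter_upwards [hnksymm', hK1] with y hy hKy
    calc ∫⁻ x, (‖k x y‖₊ : ℝ≥0∞) * w x ∂μ = ∫⁻ x, (‖k y x‖₊ : ℝ≥0∞) * w x ∂μ := by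
          refine lintegral_congr_ae ?_
          filter_upwards [hy] with x hx
          rw [hx]
      _ ≤ Cε * w y := hKy
  exact schur_operator k hkP hsymk Cε hfin
    (fun F hF => schur_key (fun x y => (‖k x y‖₊ : ℝ≥0∞)) hkP.nnnorm.coe_nnreal_ennreal w w' hw_meas hw'_meas
      hw_top hww_le hww_nk Cε hfin hK1 hK2 F hF)
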